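/- Let N ≥ 1, let 0 ≤ κ < 1, let n ∈ ℝ^N with Euclidean norm |n| = 1, and let 𝒜₁, 𝒜₂ be real N×N matrices with operator norms ‖𝒜₁ - I‖ ≤ κ and ‖𝒜₂ - I‖ ≤ κ. Then 𝒜₁n ≠ 0 and 𝒜₂n ≠ 0, and the difference of the normalized images satisfies | 𝒜₂n/|𝒜₂n| - 𝒜₁n/|𝒜₁n| | ≤ (2/(1 - κ)) · ‖𝒜₂ - 𝒜₁‖. -/

import Mathlib

open Real

/-- A vector of `ℝ^N` regarded as an element of Euclidean space (with the `ℓ²` norm). -/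
noncomputable def euc {N : ℕ} (v : Fin N → ℝ) : EuclideanSpace ℝ (Fin N) := WithLp.toLp 2 v

/-- The operator norm of an `N × N` real matrix acting on Euclidean space. -/
noncomputable def matOpNorm {N : ℕ} (A : Matrix (Fin N) (Fin N) ℝ) : ℝ :=
  ‖Matrix.toEuclideanCLM (𝕜 := ℝ) A‖

lemma normalized_diff_le {E : Type*} [NormedAddCommGroup E] [NormedSpace ℝ E]
    (x y : E) (hx : x ≠ 0) (hy : y ≠ 0) :
    ‖(‖y‖)⁻¹ • y - (‖x‖)⁻¹ • x‖ ≤ 2 * ‖y - x‖ / ‖y‖ := by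
  have hxn : (0:ℝ) < ‖x‖ := norm_pos_iff.mpr hx
  have hyn : (0:ℝ) < ‖y‖ := norm_pos_iff.mpr hy
  have key : (‖y‖)⁻¹ • y - (‖x‖)⁻¹ • x
      = (‖y‖)⁻¹ • (y - x) + ((‖y‖)⁻¹ - (‖x‖)⁻¹) • x := by
    rw [smul_sub, sub_smul]; abel
  rw [key]
  calc ‖(‖y‖)⁻¹ • (y - x) + ((‖y‖)⁻¹ - (‖x‖)⁻¹) • x‖
      ≤ ‖(‖y‖)⁻¹ • (y - x)‖ + ‖((‖y‖)⁻¹ - (‖x‖)⁻¹) • x‖ := norm_add_le _ _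
    _ = (‖y‖)⁻¹ * ‖y - x‖ + |(‖y‖)⁻¹ - (‖x‖)⁻¹| * ‖x‖ := by
        rw [norm_smul, norm_smul, Real.norm_eq_abs, Real.norm_eq_abs,
          abs_of_pos (inv_pos.mpr hyn)]
    _ ≤ (‖y‖)⁻¹ * ‖y - x‖ + (‖y‖)⁻¹ * ‖y - x‖ := by
        have e1 : |(‖y‖)⁻¹ - (‖x‖)⁻¹| * ‖x‖ = |‖x‖ - ‖y‖| / ‖y‖ := by
          rw [inv_sub_inv hyn.ne' hxn.ne', abs_div, abs_of_pos (mul_pos hyn hxn)]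
          field_simp
        have e2 : |‖x‖ - ‖y‖| ≤ ‖y - x‖ := by
          rw [abs_sub_comm]; exact abs_norm_sub_norm_le y x
        have e3 : (‖y‖)⁻¹ * ‖y - x‖ = ‖y - x‖ / ‖y‖ := by ring
        rw [e1, e3]
        gcongr
    _ = 2 * ‖y - x‖ / ‖y‖ := by field_simp; ring
/-- If `‖𝒜₁ - I‖ ≤ κ < 1` and `‖𝒜₂ - I‖ ≤ κ` and `|n| = 1`, then `𝒜₁n ≠ 0`, `𝒜₂n ≠ 0`
and `|𝒜₂n/|𝒜₂n| - 𝒜₁n/|𝒜₁n|| ≤ (2/(1-κ)) ‖𝒜₂ - 𝒜₁‖`. -/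
theorem transformed_normal_difference_estimate (N : ℕ) (hN : 1 ≤ N)
    (κ : ℝ) (hκ0 : 0 ≤ κ) (hκ1 : κ < 1)
    (n : Fin N → ℝ) (hn : ‖euc n‖ = 1)
    (A₁ A₂ : Matrix (Fin N) (Fin N) ℝ)
    (hA₁ : matOpNorm (A₁ - 1) ≤ κ) (hA₂ : matOpNorm (A₂ - 1) ≤ κ) :
    A₁.mulVec n ≠ 0 ∧ A₂.mulVec n ≠ 0 ∧
      ‖(‖euc (A₂.mulVec n)‖)⁻¹ • euc (A₂.mulVec n) -
          (‖euc (A₁.mulVec n)‖)⁻¹ • euc (A₁.mulVec n)‖ ≤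
        2 / (1 - κ) * matOpNorm (A₂ - A₁) := by
  have hk : (0:ℝ) < 1 - κ := by linarith
  have key : ∀ A : Matrix (Fin N) (Fin N) ℝ,
      euc (A.mulVec n) = Matrix.toEuclideanCLM (𝕜 := ℝ) A (euc n) :=
    fun A => (Matrix.toEuclideanCLM_toLp A n).symm
  have bnd : ∀ A : Matrix (Fin N) (Fin N) ℝ, ‖euc (A.mulVec n)‖ ≤ matOpNorm A := by
    intro A
    rw [key]
    calc ‖Matrix.toEuclideanCLM (𝕜 := ℝ) A (euc n)‖
        ≤ ‖Matrix.toEuclideanCLM (𝕜 := ℝ) A‖ * ‖euc n‖ :=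
          (Matrix.toEuclideanCLM (𝕜 := ℝ) A).le_opNorm _
      _ = matOpNorm A := by rw [hn, mul_one]; rfl
  have lower : ∀ A : Matrix (Fin N) (Fin N) ℝ, matOpNorm (A - 1) ≤ κ →
      1 - κ ≤ ‖euc (A.mulVec n)‖ := by
    intro A hA
    have h1 : ‖euc n - euc (A.mulVec n)‖ ≤ κ := by
      have heq : euc n - euc (A.mulVec n) = -(euc ((A - 1).mulVec n)) := by
        ext i
        simp [euc, Matrix.sub_mulVec, Matrix.one_mulVec]
      rw [heq, norm_neg]
      exact (bnd _).trans hA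
    have := norm_sub_norm_le (euc n) (euc (A.mulVec n))
    rw [hn] at this
    linarith
  have h₁ : euc (A₁.mulVec n) ≠ 0 := by
    intro h
    have := lower A₁ hA₁
    rw [h, norm_zero] at this; linarith
  have h₂ : euc (A₂.mulVec n) ≠ 0 := by
    intro h
    have := lower A₂ hA₂
    rw [h, norm_zero] at this; linarith
  refine ⟨fun h => h₁ (by simp [h, euc]), fun h => h₂ (by simp [h, euc]), ?_⟩
  have hdiff : ‖euc (A₂.mulVec n) - euc (A₁.mulVec n)‖ ≤ matOpNorm (A₂ - A₁) := by
    have heq : euc (A₂.mulVec n) - euc (A₁.mulVec n) = euc ((A₂ - A₁).mulVec n) := by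
      ext i
      simp [euc, Matrix.sub_mulVec]
    rw [heq]
    exact bnd _
  calc ‖(‖euc (A₂.mulVec n)‖)⁻¹ • euc (A₂.mulVec n) -
          (‖euc (A₁.mulVec n)‖)⁻¹ • euc (A₁.mulVec n)‖
      ≤ 2 * ‖euc (A₂.mulVec n) - euc (A₁.mulVec n)‖ / ‖euc (A₂.mulVec n)‖ :=
        normalized_diff_le _ _ h₁ h₂
    _ ≤ 2 * matOpNorm (A₂ - A₁) / (1 - κ) := by
        gcongr
        · show (0:ℝ) ≤ 2 * ‖Matrix.toEuclideanCLM (𝕜 := ℝ) (A₂ - A₁)‖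
          positivity
        · exact (lower A₂ hA₂)
    _ = 2 / (1 - κ) * matOpNorm (A₂ - A₁) := by ring
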